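/- Let α ∈ (0, 1/2) and define K(t) = exp(Σ_{n=1}^∞ max(α/n − |t|, 0)) for 0 < |t| ≤ 1/2. Then ∫_{−1/2}^{1/2} K(t) dt < ∞. -/

import Mathlib

open MeasureTheory Set Filter

theorem stmt_7 (α : ℝ) (hα : α ∈ Set.Ioo (0:ℝ) (1/2))
    (K : ℝ → ℝ)
    (hK : ∀ t : ℝ, 0 < |t| → |t| ≤ 1/2 →
      K t = Real.exp (∑' n : ℕ, max (α / (n + 1) - |t|) 0)) :
    IntegrableOn K (Set.Icc (-(1/2) : ℝ) (1/2)) volume := by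
  obtain ⟨hα0, hα2⟩ := hα
  set C : ℝ := Real.exp (α * (1 + Real.log 2)) with hC
  -- integrability of |t| ^ (-α) on the interval
  have hneg1 : (-1 : ℝ) < -α := by linarith
  have h0 : IntervalIntegrable (fun x : ℝ => x ^ (-α)) volume 0 (1/2) :=
    intervalIntegral.intervalIntegrable_rpow' hneg1
  have hg0 : IntervalIntegrable (fun x : ℝ => |x| ^ (-α)) volume 0 (1/2) := by
    rw [intervalIntegrable_iff] at h0 ⊢
    refine h0.congr_fun ?_ measurableSet_uIoc
    intro x hx
    rw [Set.uIoc_of_le (by norm_num : (0:ℝ) ≤ 1/2)] at hx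
    show x ^ (-α) = |x| ^ (-α)
    rw [abs_of_pos hx.1]
  have hg1 : IntervalIntegrable (fun x : ℝ => |x| ^ (-α)) volume (-(1/2)) 0 := by
    have h := (IntervalIntegrable.iff_comp_neg (by simp)).mp hg0
    simp only [abs_neg, neg_zero] at h
    exact h.symm
  have hg : IntegrableOn (fun x : ℝ => |x| ^ (-α)) (Set.Icc (-(1/2)) (1/2)) volume := by
    have h2 := hg1.trans hg0
    rw [intervalIntegrable_iff, Set.uIoc_of_le (by norm_num : (-(1/2):ℝ) ≤ 1/2)] at h2
    rwa [integrableOn_Icc_iff_integrableOn_Ioc]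
  set S : ℝ → ℝ := fun t => ∑' n : ℕ, max (α / (n + 1) - |t|) 0 with hS
  -- vanishing of terms for large n
  have hvanish : ∀ t : ℝ, t ≠ 0 → ∀ n : ℕ, n ∉ Finset.range ⌈1/|t|⌉₊ →
      max (α / ((n : ℝ) + 1) - |t|) 0 = 0 := by
    intro t ht n hn
    rw [Finset.mem_range, not_lt] at hn
    have htpos : 0 < |t| := abs_pos.mpr ht
    have h1 : (1:ℝ)/|t| ≤ (⌈1/|t|⌉₊ : ℝ) := Nat.le_ceil _
    have hn1 : (1:ℝ)/|t| ≤ (n : ℝ) + 1 := by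
      have : ((⌈1/|t|⌉₊ : ℕ) : ℝ) ≤ (n : ℝ) := by exact_mod_cast hn
      linarith
    have hle : α / ((n : ℝ) + 1) ≤ |t| := by
      rw [div_le_iff₀ (by positivity)]
      have h2 : (1:ℝ) ≤ ((n:ℝ) + 1) * |t| := by
        rw [div_le_iff₀ htpos] at hn1
        linarith
      nlinarith
    exact max_eq_right (by linarith)
  -- the key bound on S
  have hbound : ∀ t : ℝ, 0 < |t| → |t| ≤ 1/2 →
      S t ≤ α * (1 + Real.log 2 - Real.log |t|) := by
    intro t ht ht2
    have ht0 : t ≠ 0 := fun h => by simp [h] at ht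
    set N := ⌈1/|t|⌉₊ with hN
    have hsum : S t = ∑ n ∈ Finset.range N, max (α / ((n : ℝ) + 1) - |t|) 0 :=
      tsum_eq_sum (hvanish t ht0)
    have h1 : ∑ n ∈ Finset.range N, max (α / ((n : ℝ) + 1) - |t|) 0
        ≤ ∑ n ∈ Finset.range N, α / ((n : ℝ) + 1) := by
      refine Finset.sum_le_sum fun n _ => max_le ?_ (by positivity)
      linarith [ht.le]
    have h2 : ∑ n ∈ Finset.range N, α / ((n : ℝ) + 1) = α * ((harmonic N : ℚ) : ℝ) := by
      rw [harmonic, Rat.cast_sum, Finset.mul_sum]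
      refine Finset.sum_congr rfl fun n _ => ?_
      push_cast
      rw [div_eq_mul_inv]
    have h3 : ((harmonic N : ℚ) : ℝ) ≤ 1 + Real.log N := harmonic_le_one_add_log N
    have hNpos : 0 < N := Nat.ceil_pos.mpr (by positivity)
    have h12 : (1:ℝ) ≤ 1/|t| := by
      rw [le_div_iff₀ ht]; linarith
    have hN2 : (N : ℝ) ≤ 2 / |t| := by
      have hc : (N : ℝ) < 1/|t| + 1 := Nat.ceil_lt_add_one (by positivity)
      have : (2:ℝ)/|t| = 1/|t| + 1/|t| := by ring
      linarith
    have h4 : Real.log N ≤ Real.log (2/|t|) :=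
      Real.log_le_log (by exact_mod_cast hNpos) hN2
    have h5 : Real.log (2/|t|) = Real.log 2 - Real.log |t| :=
      Real.log_div (by norm_num) (ne_of_gt ht)
    have : S t ≤ α * (1 + Real.log N) := by
      rw [hsum]
      calc ∑ n ∈ Finset.range N, max (α / ((n : ℝ) + 1) - |t|) 0
          ≤ ∑ n ∈ Finset.range N, α / ((n : ℝ) + 1) := h1
        _ = α * ((harmonic N : ℚ) : ℝ) := h2
        _ ≤ α * (1 + Real.log N) := by nlinarith
    nlinarith
  -- a.e. nonzero
  have hae : ∀ᵐ t ∂(volume.restrict (Set.Icc (-(1/2):ℝ) (1/2))), t ≠ 0 := by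
    refine ae_restrict_of_ae ?_
    rw [ae_iff]
    simp only [ne_eq, not_not]
    have : {a : ℝ | a = 0} = {(0:ℝ)} := Set.setOf_eq_eq_singleton
    rw [this]
    exact measure_singleton 0
  -- measurability of S on the restricted measure
  have hSmeas : AEMeasurable S (volume.restrict (Set.Icc (-(1/2):ℝ) (1/2))) := by
    refine aemeasurable_of_tendsto_metrizable_ae atTop
      (f := fun N t => ∑ n ∈ Finset.range N, max (α / ((n : ℝ) + 1) - |t|) 0)
      (fun N => Continuous.aemeasurable ?_) ?_
    · exact continuous_finset_sum _ fun n _ =>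
        (continuous_const.sub continuous_abs).max continuous_const
    · filter_upwards [hae] with t ht
      have hsummable : Summable (fun n : ℕ => max (α / ((n : ℝ) + 1) - |t|) 0) :=
        summable_of_ne_finset_zero (hvanish t ht)
      exact hsummable.hasSum.tendsto_sum_nat
  have hFmeas : AEStronglyMeasurable (fun t => Real.exp (S t))
      (volume.restrict (Set.Icc (-(1/2):ℝ) (1/2))) :=
    (Real.measurable_exp.comp_aemeasurable hSmeas).aestronglyMeasurable
  have hdom : IntegrableOn (fun t : ℝ => C * |t| ^ (-α))
      (Set.Icc (-(1/2)) (1/2)) volume := hg.const_mul C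
  have hFint : IntegrableOn (fun t => Real.exp (S t))
      (Set.Icc (-(1/2):ℝ) (1/2)) volume := by
    refine hdom.mono' hFmeas ?_
    filter_upwards [hae, ae_restrict_mem measurableSet_Icc] with t ht htmem
    have htpos : 0 < |t| := abs_pos.mpr ht
    have htle : |t| ≤ 1/2 := abs_le.mpr ⟨htmem.1, htmem.2⟩
    rw [Real.norm_eq_abs, abs_of_pos (Real.exp_pos _)]
    calc Real.exp (S t) ≤ Real.exp (α * (1 + Real.log 2 - Real.log |t|)) :=
          Real.exp_le_exp.mpr (hbound t htpos htle)
      _ = C * |t| ^ (-α) := by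
          rw [hC, Real.rpow_def_of_pos htpos, ← Real.exp_add]
          congr 1
          ring
  refine hFint.congr ?_
  filter_upwards [hae, ae_restrict_mem measurableSet_Icc] with t ht htmem
  have htpos : 0 < |t| := abs_pos.mpr ht
  have htle : |t| ≤ 1/2 := abs_le.mpr ⟨htmem.1, htmem.2⟩
  exact (hK t htpos htle).symm
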